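/- Recursion (K1a): for every σ ∈ {0,1,…,r}^N and every integer k with 1 ≤ k ≤ r-1, 𝐠(σ·k·0) = (t^{l+1} + a)·𝐠((k-1)·σ), where l = #{i : σ_i < r}, σ·k·0 denotes σ with the entries k and then 0 appended, and (k-1)·σ denotes σ with the entry k-1 prepended. -/

import Mathlib

open MvPolynomial

noncomputable section

/-- The field `F = ℚ(q,a,t)` of rational functions in three variables over `ℚ`. -/
abbrev KRF : Type := FractionRing (MvPolynomial (Fin 3) ℚ)

/-- The variable `q` in `F`. -/
def fq : KRF := algebraMap (MvPolynomial (Fin 3) ℚ) KRF (X 0)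
/-- The variable `a` in `F`. -/
def fa : KRF := algebraMap (MvPolynomial (Fin 3) ℚ) KRF (X 1)
/-- The variable `t` in `F`. -/
def ft : KRF := algebraMap (MvPolynomial (Fin 3) ℚ) KRF (X 2)

/-- The number `|v|` of ones in a binary sequence. -/
def onesCt (v : List Bool) : ℕ := v.count true

/-- A p-family: a function on (balanced) pairs of binary sequences with values in
`F = ℚ(q,a,t)` satisfying the five recursion rules (1)-(5). -/
def IsPFamily (p : List Bool → List Bool → KRF) : Prop :=
  (∀ n : ℕ, p [] (List.replicate n false) = ((1 + fa) / (1 - fq)) ^ n) ∧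
  (∀ m : ℕ, p (List.replicate m false) [] = ((1 + fa) / (1 - fq)) ^ m) ∧
  (∀ v w : List Bool, onesCt v = onesCt w →
      p (v ++ [true]) (w ++ [true]) = (ft ^ onesCt v + fa) * p v w) ∧
  (∀ v w : List Bool, onesCt v = onesCt w + 1 →
      p (v ++ [false]) (w ++ [true]) = p v (true :: w)) ∧
  (∀ v w : List Bool, onesCt v + 1 = onesCt w →
      p (v ++ [true]) (w ++ [false]) = p (true :: v) w) ∧
  (∀ v w : List Bool, onesCt v = onesCt w →
      p (v ++ [false]) (w ++ [false]) =
        ft ^ (-(onesCt v : ℤ)) * p (true :: v) (true :: w) +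
          fq * ft ^ (-(onesCt v : ℤ)) * p (false :: v) (false :: w))

/-- The symbols `1`, `0`, `∗` used in fillings. -/
inductive Symb : Type
  | one : Symb
  | zero : Symb
  | star : Symb
deriving DecidableEq

/-- An admissible filling of the `r × N` grid (rows indexed top-to-bottom by `Fin r`,
columns left-to-right by `Fin N`): every row and every column contains at most one `1`,
every cell strictly below a `1` in the same column is `∗`, and every other cell is `0`
(i.e. every `∗` lies strictly below a `1` in its column). -/
def IsAdmissible {r N : ℕ} (T : Fin r → Fin N → Symb) : Prop :=
  (∀ (i : Fin r) (j j' : Fin N), T i j = Symb.one → T i j' = Symb.one → j = j') ∧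
  (∀ (j : Fin N) (i i' : Fin r), T i j = Symb.one → T i' j = Symb.one → i = i') ∧
  (∀ (i i' : Fin r) (j : Fin N), T i j = Symb.one → i < i' → T i' j = Symb.star) ∧
  (∀ (i : Fin r) (j : Fin N), T i j = Symb.star → ∃ i' : Fin r, i' < i ∧ T i' j = Symb.one)

/-- `σ(T)_j`: the number of cells labeled `0` in the `j`-th column of `T`. -/
def colZeros {r N : ℕ} (T : Fin r → Fin N → Symb) (j : Fin N) : ℕ :=
  (Finset.univ.filter (fun i => T i j = Symb.zero)).card

/-- `v(T)_j = 1` iff the `j`-th column of `T` is occupied (contains a `1`). -/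
def vFun {r N : ℕ} (T : Fin r → Fin N → Symb) (j : Fin N) : Bool :=
  decide (∃ i : Fin r, T i j = Symb.one)

/-- The binary sequence `v(T)` as a list. -/
def vList {r N : ℕ} (T : Fin r → Fin N → Symb) : List Bool :=
  (List.finRange N).map (vFun T)

/-- The binary sequence `w(T)`: read the entries of `T` from left to right along each row,
taking the rows from bottom to top, skipping all cells labeled `∗` (with `1 ↦ true`,
`0 ↦ false`). -/
def wList {r N : ℕ} (T : Fin r → Fin N → Symb) : List Bool :=
  ((List.finRange r).reverse.map (fun i =>
    (List.finRange N).filterMap (fun j =>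
      match T i j with
      | Symb.one => some true
      | Symb.zero => some false
      | Symb.star => none))).flatten

namespace K1aAux

/-- The contribution of a single column with zero-count `c` to the word of row `i`. -/
def E (c i : ℕ) : List Bool := if i < c then [false] else if i = c then [true] else []

/-- The word of row `i` of the canonical filling with column zero-counts `σ`. -/
def rowWord {M : ℕ} (σ : Fin M → ℕ) (i : ℕ) : List Bool :=
  (List.finRange M).filterMap (fun j =>
    if i < σ j then some false else if i = σ j then some true else none)

/-- The descending list `[m-1, …, 1, 0]`. -/
def DL (m : ℕ) : List ℕ := (List.range m).reverse

lemma DL_succ (m : ℕ) : DL (m + 1) = m :: DL m := by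
  simp [DL, List.range_succ]

lemma card_filter_univ {n : ℕ} (p : Fin n → Prop) [DecidablePred p] :
    (Finset.univ.filter p).card = (List.finRange n).countP (fun j => decide (p j)) := by
  rw [Fin.univ_def]
  simp [Finset.filter, Finset.card, List.countP_eq_length_filter]

lemma card_filter_val_lt {r : ℕ} (c : ℕ) (hc : c ≤ r) :
    (Finset.univ.filter (fun i : Fin r => (i : ℕ) < c)).card = c := by
  rcases lt_or_eq_of_le hc with h | h
  · have h2 : (Finset.univ.filter (fun i : Fin r => (i : ℕ) < c)) = Finset.Iio ⟨c, h⟩ := by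
      ext i; simp [Finset.mem_Iio, Fin.lt_def]
    rw [h2, Fin.card_Iio]
  · subst h
    have h2 : (Finset.univ.filter (fun i : Fin c => (i : ℕ) < c)) = Finset.univ := by
      ext i; simp [i.isLt]
    rw [h2, Finset.card_univ, Fintype.card_fin]

/-- An admissible filling is determined by its column zero-counts: in a column with
zero-count `s ≤ r` the top `s` cells are `0`, then (if `s < r`) a `1`, then `∗`s. -/
lemma col_struct {r M : ℕ} {T : Fin r → Fin M → Symb} (hT : IsAdmissible T)
    (j : Fin M) {s : ℕ} (hs : colZeros T j = s) (hsr : s ≤ r) (i : Fin r) :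
    T i j = if (i : ℕ) < s then Symb.zero else if (i : ℕ) = s then Symb.one else Symb.star := by
  obtain ⟨-, h2, h3, h4⟩ := hT
  by_cases hone : ∃ i0, T i0 j = Symb.one
  · obtain ⟨i0, hi0⟩ := hone
    have habove : ∀ i' : Fin r, i' < i0 → T i' j = Symb.zero := by
      intro i' h
      cases e : T i' j with
      | one => exact absurd (h2 j i' i0 e hi0) (ne_of_lt h)
      | zero => rfl
      | star =>
        obtain ⟨i'', hlt, hone''⟩ := h4 i' j e
        have heq := h2 j i'' i0 hone'' hi0
        subst heq
        exact absurd (hlt.trans h) (lt_irrefl _)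
    have hval : s = (i0 : ℕ) := by
      rw [← hs]
      unfold colZeros
      have hfe : (Finset.univ.filter (fun i => T i j = Symb.zero))
          = Finset.univ.filter (fun i : Fin r => (i : ℕ) < (i0 : ℕ)) := by
        ext i'
        simp only [Finset.mem_filter, Finset.mem_univ, true_and]
        constructor
        · intro hz
          rcases lt_trichotomy i' i0 with h | h | h
          · exact h
          · subst h; rw [hi0] at hz; cases hz
          · rw [h3 i0 i' j hi0 h] at hz; cases hz
        · intro h; exact habove i' (by exact h)
      rw [hfe, card_filter_val_lt _ (le_of_lt i0.isLt)]
    subst hval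
    rcases lt_trichotomy (i : ℕ) (i0 : ℕ) with h | h | h
    · rw [if_pos h]; exact habove i (by exact h)
    · rw [if_neg (by omega), if_pos h]
      have heq : i = i0 := Fin.ext h
      rw [heq]; exact hi0
    · rw [if_neg (by omega), if_neg (by omega)]
      exact h3 i0 i j hi0 (by exact h)
  · push_neg at hone
    have hzero : ∀ i' : Fin r, T i' j = Symb.zero := by
      intro i'
      cases e : T i' j with
      | one => exact absurd e (hone i')
      | zero => rfl
      | star =>
        obtain ⟨i'', _, h⟩ := h4 i' j e
        exact absurd h (hone i'')
    have hsv : s = r := by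
      rw [← hs]; unfold colZeros
      rw [Finset.filter_true_of_mem (fun i _ => hzero i), Finset.card_univ, Fintype.card_fin]
    subst hsv
    rw [if_pos i.isLt]
    exact hzero i

lemma rowWord_cons {M : ℕ} (c : ℕ) (σ : Fin M → ℕ) (i : ℕ) :
    rowWord (Fin.cons c σ : Fin (M + 1) → ℕ) i = E c i ++ rowWord σ i := by
  unfold rowWord E
  rw [List.finRange_succ, List.filterMap_cons, List.filterMap_map]
  simp only [Fin.cons_zero]
  have hcomp : ((fun j : Fin (M+1) =>
      if i < (Fin.cons c σ : Fin (M+1) → ℕ) j then some false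
      else if i = (Fin.cons c σ : Fin (M+1) → ℕ) j then some true else none)
        ∘ Fin.succ) = (fun j : Fin M =>
      if i < σ j then some false else if i = σ j then some true else none) := by
    funext j; simp [Function.comp, Fin.cons_succ]
  rw [hcomp]
  split_ifs <;> rfl

lemma rowWord_snoc {M : ℕ} (c : ℕ) (σ : Fin M → ℕ) (i : ℕ) :
    rowWord (Fin.snoc σ c : Fin (M + 1) → ℕ) i = rowWord σ i ++ E c i := by
  unfold rowWord E
  rw [List.finRange_succ_last, List.filterMap_append, List.filterMap_map]
  have hcomp : ((fun j : Fin (M+1) =>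
      if i < (Fin.snoc σ c : Fin (M+1) → ℕ) j then some false
      else if i = (Fin.snoc σ c : Fin (M+1) → ℕ) j then some true else none)
        ∘ Fin.castSucc) = (fun j : Fin M =>
      if i < σ j then some false else if i = σ j then some true else none) := by
    funext j; simp [Function.comp, Fin.snoc_castSucc]
  rw [hcomp]
  congr 1
  simp only [List.filterMap_cons, List.filterMap_nil, Fin.snoc_last]
  split_ifs <;> rfl

/-- The key combinatorial identity behind (K1a). -/
lemma key_flatten (R : ℕ → List Bool) (k : ℕ) (hk : 1 ≤ k) (m : ℕ) :
    ((DL (m + 1)).map (fun i => R i ++ E k i ++ E 0 i)).flatten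
      = R m ++ ((DL m).map (fun i => E (k - 1) i ++ R i)).flatten ++ [false, true] := by
  induction m with
  | zero =>
    have h0k : 0 < k := hk
    simp [DL, E, List.range_succ, h0k]
  | succ m ih =>
    rw [DL_succ, List.map_cons, List.flatten_cons, ih, DL_succ, List.map_cons,
      List.flatten_cons]
    have h0 : E 0 (m + 1) = [] := by simp [E]
    have hE : E k (m + 1) = E (k - 1) m := by
      unfold E; split_ifs <;> first | rfl | omega
    rw [h0, hE]
    simp [List.append_assoc]

lemma count_true_filterMap {α : Type*} (f : α → Option Bool) (l : List α) :
    (l.filterMap f).count true = l.countP (fun a => f a == some true) := by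
  induction l with
  | nil => rfl
  | cons a l ih =>
    rw [List.filterMap_cons, List.countP_cons]
    cases h : f a with
    | none => simp [h, ih]
    | some b => cases b <;> simp [h, ih, List.count_cons]

lemma onesCt_rowWord {M : ℕ} (σ : Fin M → ℕ) (i : ℕ) :
    onesCt (rowWord σ i) = (List.finRange M).countP (fun j => σ j == i) := by
  unfold onesCt rowWord
  rw [count_true_filterMap]
  apply List.countP_congr
  intro j _
  split_ifs with h1 h2 <;> simp <;> omega

lemma onesCt_flatten (f : ℕ → List Bool) (m : ℕ) :
    onesCt (((DL m).map f).flatten) = ((List.range m).map (fun i => onesCt (f i))).sum := by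
  induction m with
  | zero => rfl
  | succ m ih =>
    rw [DL_succ, List.map_cons, List.flatten_cons, List.range_succ, List.map_append,
      List.sum_append]
    unfold onesCt at *
    rw [List.count_append, ih]
    simp
    omega

lemma sum_map_add {α : Type*} (l : List α) (f g : α → ℕ) :
    (l.map (fun a => f a + g a)).sum = (l.map f).sum + (l.map g).sum := by
  induction l with
  | nil => rfl
  | cons a l ih => simp [ih]; omega

lemma onesCt_E (c i : ℕ) : onesCt (E c i) = if i = c then 1 else 0 := by
  unfold onesCt E
  split_ifs <;> simp_all

lemma sum_onesCt_E (c m : ℕ) (h : c < m) :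
    ((List.range m).map (fun i => onesCt (E c i))).sum = 1 := by
  induction m with
  | zero => omega
  | succ m ih =>
    rw [List.range_succ, List.map_append, List.sum_append]
    rcases Nat.lt_or_ge c m with h' | h'
    · rw [ih h']; simp [onesCt_E]; omega
    · have hcm : c = m := by omega
      subst hcm
      have hz : ∀ i ∈ List.range c, onesCt (E c i) = 0 := by
        intro i hi
        rw [onesCt_E, if_neg]
        simp at hi; omega
      rw [List.map_congr_left hz]
      simp [onesCt_E]

lemma countP_lt_succ {α : Type*} (g : α → ℕ) (m : ℕ) (l : List α) :
    l.countP (fun a => g a < m + 1)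
      = l.countP (fun a => g a < m) + l.countP (fun a => g a == m) := by
  induction l with
  | nil => rfl
  | cons a l ih =>
    simp only [List.countP_cons, ih, decide_eq_true_eq, beq_iff_eq]
    split_ifs <;> omega

lemma sum_fibers {M : ℕ} (σ : Fin M → ℕ) (m : ℕ) :
    ((List.range m).map (fun i => (List.finRange M).countP (fun j => σ j == i))).sum
      = (List.finRange M).countP (fun j => σ j < m) := by
  induction m with
  | zero => simp
  | succ m ih =>
    rw [List.range_succ, List.map_append, List.sum_append, ih, countP_lt_succ σ m]
    simp

lemma vList_eq {r M : ℕ} {T : Fin r → Fin M → Symb} (σ : Fin M → ℕ)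
    (hcol : ∀ (i : Fin r) (j : Fin M), T i j =
      if (i : ℕ) < σ j then Symb.zero else if (i : ℕ) = σ j then Symb.one else Symb.star) :
    vList T = (List.finRange M).map (fun j => decide (σ j < r)) := by
  unfold vList
  apply List.map_congr_left
  intro j _
  unfold vFun
  rw [decide_eq_decide]
  constructor
  · rintro ⟨i, hi⟩
    rw [hcol i j] at hi
    rcases Nat.lt_trichotomy (i : ℕ) (σ j) with h | h | h
    · rw [if_pos h] at hi; cases hi
    · have := i.isLt; omega
    · rw [if_neg (by omega), if_neg (by omega)] at hi; cases hi
  · intro h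
    refine ⟨⟨σ j, h⟩, ?_⟩
    rw [hcol]
    simp

lemma wList_eq {r M : ℕ} {T : Fin r → Fin M → Symb} (σ : Fin M → ℕ)
    (hcol : ∀ (i : Fin r) (j : Fin M), T i j =
      if (i : ℕ) < σ j then Symb.zero else if (i : ℕ) = σ j then Symb.one else Symb.star) :
    wList T = ((DL r).map (rowWord σ)).flatten := by
  unfold wList
  congr 1
  have h1 : (List.finRange r).reverse.map (fun i =>
      (List.finRange M).filterMap (fun j =>
        match T i j with
        | Symb.one => some true
        | Symb.zero => some false
        | Symb.star => none))
      = (List.finRange r).reverse.map (fun i : Fin r => rowWord σ (i : ℕ)) := by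
    apply List.map_congr_left
    intro i _
    unfold rowWord
    apply List.filterMap_congr
    intro j _
    rw [hcol i j]
    split_ifs <;> rfl
  rw [h1]
  have h2 : List.map (fun i : Fin r => rowWord σ (i : ℕ)) (List.finRange r).reverse
      = List.map (rowWord σ) (List.map Fin.val (List.finRange r).reverse) := by
    rw [List.map_map]; rfl
  rw [h2, List.map_reverse, List.map_coe_finRange_eq_range]
  rfl

lemma onesCt_append_true (l : List Bool) : onesCt (l ++ [true]) = onesCt l + 1 := by
  simp [onesCt, List.count_append]

lemma onesCt_append_false (l : List Bool) : onesCt (l ++ [false]) = onesCt l := by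
  simp [onesCt, List.count_append]

lemma onesCt_cons_true (l : List Bool) : onesCt (true :: l) = onesCt l + 1 := by
  simp [onesCt, List.count_cons]

end K1aAux

/-- Recursion (K1a): `𝐠(σ·k·0) = (t^{l+1} + a)·𝐠((k-1)·σ)` for `1 ≤ k ≤ r-1`, where
`l = #{i : σ_i < r}`.  Here `𝐠(σ) = p(v(σ), w(σ)·0)`, with `T1` (resp. `T2`) the unique
admissible filling whose column-zero-counts are `σ·k·0` (i.e. `Fin.snoc (Fin.snoc σ k) 0`)
(resp. `(k-1)·σ`, i.e. `Fin.cons (k-1) σ`). -/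
theorem g_recursion_K1a (p : List Bool → List Bool → KRF) (hp : IsPFamily p)
    (r : ℕ) (hr : 1 ≤ r) (N : ℕ) (σ : Fin N → ℕ) (hσ : ∀ i, σ i ≤ r)
    (k : ℕ) (hk1 : 1 ≤ k) (hk2 : k ≤ r - 1)
    (T1 : Fin r → Fin (N + 2) → Symb) (hT1 : IsAdmissible T1)
    (hT1σ : ∀ j, colZeros T1 j = (Fin.snoc (Fin.snoc σ k : Fin (N + 1) → ℕ) 0 : Fin (N + 2) → ℕ) j)
    (T2 : Fin r → Fin (N + 1) → Symb) (hT2 : IsAdmissible T2)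
    (hT2σ : ∀ j, colZeros T2 j = (Fin.cons (k - 1) σ : Fin (N + 1) → ℕ) j) :
    p (vList T1) (wList T1 ++ [false]) =
      (ft ^ ((Finset.univ.filter (fun i => σ i < r)).card + 1) + fa) *
        p (vList T2) (wList T2 ++ [false]) := by
  classical
  open K1aAux in
  obtain ⟨-, -, hp2, -, hp4, -⟩ := hp
  have hr2 : 2 ≤ r := by omega
  obtain ⟨m, rfl⟩ : ∃ m, r = m + 1 := ⟨r - 1, by omega⟩
  have hkm : k ≤ m := by omega
  -- column zero-count bounds
  have hσ1r : ∀ j, (Fin.snoc (Fin.snoc σ k : Fin (N + 1) → ℕ) 0 : Fin (N + 2) → ℕ) j ≤ m + 1 := by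
    intro j
    refine Fin.lastCases ?_ (fun j' => ?_) j
    · simp
    · simp only [Fin.snoc_castSucc]
      refine Fin.lastCases ?_ (fun j'' => ?_) j'
      · simp [Fin.snoc_last]; omega
      · simp only [Fin.snoc_castSucc]; exact hσ j''
  have hσ2r : ∀ j, (Fin.cons (k - 1) σ : Fin (N + 1) → ℕ) j ≤ m + 1 := by
    intro j
    refine Fin.cases ?_ (fun j' => ?_) j
    · simp; omega
    · simp only [Fin.cons_succ]; exact hσ j'
  -- column structures
  have hcol1 : ∀ (i : Fin (m+1)) (j : Fin (N + 2)), T1 i j =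
      if (i : ℕ) < (Fin.snoc (Fin.snoc σ k : Fin (N + 1) → ℕ) 0 : Fin (N + 2) → ℕ) j
      then Symb.zero
      else if (i : ℕ) = (Fin.snoc (Fin.snoc σ k : Fin (N + 1) → ℕ) 0 : Fin (N + 2) → ℕ) j
      then Symb.one else Symb.star :=
    fun i j => K1aAux.col_struct hT1 j (hT1σ j) (hσ1r j) i
  have hcol2 : ∀ (i : Fin (m+1)) (j : Fin (N + 1)), T2 i j =
      if (i : ℕ) < (Fin.cons (k - 1) σ : Fin (N + 1) → ℕ) j then Symb.zero
      else if (i : ℕ) = (Fin.cons (k - 1) σ : Fin (N + 1) → ℕ) j then Symb.one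
      else Symb.star :=
    fun i j => K1aAux.col_struct hT2 j (hT2σ j) (hσ2r j) i
  -- the v-lists
  have hv1 : vList T1
      = ((List.finRange N).map (fun j => decide (σ j < m + 1))) ++ [true, true] := by
    rw [K1aAux.vList_eq _ hcol1, List.finRange_succ_last, List.map_append, List.map_map,
      List.finRange_succ_last, List.map_append, List.map_map]
    have hkr : k < m + 1 := by omega
    simp [Function.comp_def, Fin.snoc_castSucc, Fin.snoc_last, hkm]
  have hv2 : vList T2
      = true :: ((List.finRange N).map (fun j => decide (σ j < m + 1))) := by
    rw [K1aAux.vList_eq _ hcol2, List.finRange_succ, List.map_cons, List.map_map]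
    have hkr : k - 1 < m + 1 := by omega
    simp [Function.comp, Fin.cons_zero, Fin.cons_succ, hkr]
  -- the w-lists
  have hw1 : wList T1 = ((K1aAux.DL (m+1)).map
      (fun i => K1aAux.rowWord σ i ++ K1aAux.E k i ++ K1aAux.E 0 i)).flatten := by
    rw [K1aAux.wList_eq _ hcol1]
    congr 1
    apply List.map_congr_left
    intro i _
    rw [K1aAux.rowWord_snoc, K1aAux.rowWord_snoc]
  have hw2 : wList T2 = ((K1aAux.DL (m+1)).map
      (fun i => K1aAux.E (k-1) i ++ K1aAux.rowWord σ i)).flatten := by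
    rw [K1aAux.wList_eq _ hcol2]
    congr 1
    apply List.map_congr_left
    intro i _
    rw [K1aAux.rowWord_cons]
  -- the key identity w(T1) = w(T2) ++ [0, 1]
  have hwkey : wList T1 = wList T2 ++ [false, true] := by
    rw [hw1, hw2, K1aAux.key_flatten _ k hk1 m, K1aAux.DL_succ, List.map_cons,
      List.flatten_cons]
    have hEm : K1aAux.E (k-1) m = [] := by
      unfold K1aAux.E
      rw [if_neg (by omega), if_neg (by omega)]
    rw [hEm]
    simp [List.append_assoc]
  -- counting ones
  have hoV : onesCt ((List.finRange N).map (fun j => decide (σ j < m + 1)))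
      = (List.finRange N).countP (fun j => σ j < m + 1) := by
    unfold onesCt
    rw [List.count_eq_countP, List.countP_map]
    apply List.countP_congr
    intro j _
    simp [Function.comp]
  have hoW : onesCt (wList T2) = (List.finRange N).countP (fun j => σ j < m + 1) + 1 := by
    rw [hw2, K1aAux.onesCt_flatten]
    have hsplit : ∀ i : ℕ, onesCt (K1aAux.E (k-1) i ++ K1aAux.rowWord σ i)
        = onesCt (K1aAux.E (k-1) i) + onesCt (K1aAux.rowWord σ i) := by
      intro i; simp [onesCt, List.count_append]
    calc ((List.range (m+1)).map
            (fun i => onesCt (K1aAux.E (k-1) i ++ K1aAux.rowWord σ i))).sum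
        = ((List.range (m+1)).map
            (fun i => onesCt (K1aAux.E (k-1) i) + onesCt (K1aAux.rowWord σ i))).sum := by
          congr 1
          exact List.map_congr_left (fun i _ => hsplit i)
      _ = ((List.range (m+1)).map (fun i => onesCt (K1aAux.E (k-1) i))).sum
            + ((List.range (m+1)).map (fun i => onesCt (K1aAux.rowWord σ i))).sum :=
          K1aAux.sum_map_add _ _ _
      _ = 1 + ((List.range (m+1)).map (fun i => onesCt (K1aAux.rowWord σ i))).sum := by
          rw [K1aAux.sum_onesCt_E (k-1) (m+1) (by omega)]
      _ = 1 + ((List.range (m+1)).map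
            (fun i => (List.finRange N).countP (fun j => σ j == i))).sum := by
          congr 1
          congr 1
          exact List.map_congr_left (fun i _ => K1aAux.onesCt_rowWord σ i)
      _ = (List.finRange N).countP (fun j => σ j < m + 1) + 1 := by
          rw [K1aAux.sum_fibers σ (m+1)]
          omega
  have hcard : (Finset.univ.filter (fun i => σ i < m + 1)).card
      = (List.finRange N).countP (fun j => σ j < m + 1) :=
    K1aAux.card_filter_univ _
  -- the p-calculation
  rw [hv1, hv2, hwkey]
  have e1 : ((List.finRange N).map (fun j => decide (σ j < m + 1))) ++ [true, true]
      = (((List.finRange N).map (fun j => decide (σ j < m + 1))) ++ [true]) ++ [true] := by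
    simp
  have e2 : (wList T2 ++ [false, true]) ++ [false]
      = (((wList T2 ++ [false]) ++ [true])) ++ [false] := by simp
  rw [e1, e2]
  rw [hp4 _ _ (by
    rw [K1aAux.onesCt_append_true, K1aAux.onesCt_append_true, K1aAux.onesCt_append_false,
      hoV, hoW])]
  have e3 : true :: (((List.finRange N).map (fun j => decide (σ j < m + 1))) ++ [true])
      = (true :: ((List.finRange N).map (fun j => decide (σ j < m + 1)))) ++ [true] := rfl
  rw [e3]
  rw [hp2 _ _ (by
    rw [K1aAux.onesCt_cons_true, K1aAux.onesCt_append_false, hoV, hoW])]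
  have e4 : onesCt (true :: ((List.finRange N).map (fun j => decide (σ j < m + 1))))
      = (Finset.univ.filter (fun i => σ i < m + 1)).card + 1 := by
    rw [K1aAux.onesCt_cons_true, hoV, hcard]
  rw [e4]
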